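/- arXiv:2103.04752 — 6 statements merged into one kernel-verified Lean document; each statement's English description precedes it below -/
import Mathlib

section
/- Let ρ : G → G be a group homomorphism and define Ξ_ρ := {β ∈ ℂ | ρ([a,0])·β = β for all a ∈ U(1)}. Then a map τ : ℂ → ℂ satisfies the equivariance condition τ(g·z) = ρ(g)·τ(z) for all g ∈ G and z ∈ ℂ if and only if there exists β ∈ Ξ_ρ such that τ(z) = ρ([1,z])·β for all z ∈ ℂ. -/
open Complex MeasureTheory ComplexConjugate

noncomputable section

/-- The group `G = U(1) ⋉ ℂ`, as pairs `[a, b]` with `a ∈ U(1)`, `b ∈ ℂ`. -/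
abbrev G1 : Type := Circle × ℂ

/-- Multiplication `[a,b][a',b'] = [aa', ab' + b]` in `G`. -/
def Gmul (g h : G1) : G1 := (g.1 * h.1, (g.1 : ℂ) * h.2 + g.2)

/-- Inverse `[a,b]⁻¹ = [a⁻¹, -a⁻¹ b]` in `G`. -/
def Ginv (g : G1) : G1 := (g.1⁻¹, -((g.1⁻¹ : Circle) : ℂ) * g.2)

/-- The action `[a,b]·z = a z + b` of `G` on `ℂ`. -/
def Gact (g : G1) (z : ℂ) : ℂ := (g.1 : ℂ) * z + g.2

/-- `ρ : G → G` is a group homomorphism. -/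
def IsGHom (ρ : G1 → G1) : Prop := ∀ g h, ρ (Gmul g h) = Gmul (ρ g) (ρ h)

/-- `(ρ, τ)` is an equivariant pair: `ρ` is a `G`-endomorphism and
`τ(g·z) = ρ(g)·τ(z)` for all `g ∈ G`, `z ∈ ℂ`. -/
def Equivariant (ρ : G1 → G1) (τ : ℂ → ℂ) : Prop :=
  IsGHom ρ ∧ ∀ g z, τ (Gact g z) = Gact (ρ g) (τ z)

/-- The automorphy factor `j^α(g,z) = exp(-iα Im(z conj(g⁻¹·0)))`. -/
def jfac (α : ℝ) (g : G1) (z : ℂ) : ℂ :=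
  Complex.exp (-Complex.I * α * ((z * conj (Gact (Ginv g) 0)).im : ℝ))

/-- Wirtinger derivative `∂f/∂z`. -/
def wdz (f : ℂ → ℂ) (z : ℂ) : ℂ :=
  (1/2 : ℂ) * (fderiv ℝ f z 1 - Complex.I * fderiv ℝ f z Complex.I)

/-- Wirtinger derivative `∂f/∂z̄`. -/
def wdzbar (f : ℂ → ℂ) (z : ℂ) : ℂ :=
  (1/2 : ℂ) * (fderiv ℝ f z 1 + Complex.I * fderiv ℝ f z Complex.I)

/-- `S(z) = νz + μ(τ(z) ∂τ̄/∂z̄(z) − τ̄(z) ∂τ/∂z̄(z))`. -/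
def Sfun (ν μ : ℝ) (τ : ℂ → ℂ) (z : ℂ) : ℂ :=
  (ν : ℂ) * z + (μ : ℂ) * (τ z * wdzbar (fun w => conj (τ w)) z - conj (τ z) * wdzbar τ z)

/-- Euclidean Laplacian `Δh = 4 ∂²h/∂z∂z̄`. -/
def lap (f : ℂ → ℂ) (z : ℂ) : ℂ := 4 * wdz (wdzbar f) z

/-- The mixed magnetic Schrödinger operator `Δ^{ν,μ}_τ`. -/
def DeltaTau (ν μ : ℝ) (τ f : ℂ → ℂ) (z : ℂ) : ℂ :=
  lap f z
    + 2 * (Sfun ν μ τ z * wdz f z - conj (Sfun ν μ τ z) * wdzbar f z)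
    - (‖Sfun ν μ τ z‖ : ℂ)^2 * f z
    + (μ : ℂ) * (τ z * lap (fun w => conj (τ w)) z - conj (τ z) * lap τ z) * f z

/-- The Landau Hamiltonian `Δ_B`. -/
def DeltaB (B : ℝ) (f : ℂ → ℂ) (z : ℂ) : ℂ :=
  lap f z + 2 * (B : ℂ) * (z * wdz f z - conj z * wdzbar f z)
    - (B : ℂ)^2 * (‖z‖ : ℂ)^2 * f z

/-- The magnetic field `B(z) = ν + μ(|∂τ/∂z|² − |∂τ/∂z̄|²)`. -/
def Bfield (ν μ : ℝ) (τ : ℂ → ℂ) (z : ℂ) : ℝ :=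
  ν + μ * ((‖wdz τ z‖)^2 - (‖wdzbar τ z‖)^2)

/-- `φ : ℂ → ℝ` is a smooth gauge: `θ^{ν,μ}_τ = θ_B + i dφ`, i.e.
`i·Dφ(z)(v) = −(1/2)(conj(S(z))v − S(z)conj(v)) + (B/2)(z̄v − z v̄)`. -/
def IsGauge (ν μ B : ℝ) (τ : ℂ → ℂ) (φ : ℂ → ℝ) : Prop :=
  ContDiff ℝ (⊤ : ℕ∞) φ ∧ ∀ z v : ℂ,
    Complex.I * ((fderiv ℝ φ z v : ℝ) : ℂ) =
      -(1/2 : ℂ) * (conj (Sfun ν μ τ z) * v - Sfun ν μ τ z * conj v)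
      + ((B : ℂ)/2) * (conj z * v - z * conj v)

/-- `Ξ_ρ = {β ∈ ℂ | ρ([a,0])·β = β for all a ∈ U(1)}`. -/
def Xi (ρ : G1 → G1) : Set ℂ := {β : ℂ | ∀ a : Circle, Gact (ρ (a, 0)) β = β}

/-- a map `τ` is compatible with the `G`-endomorphism `ρ` iff
`τ(z) = ρ([1,z])·β` for some `β ∈ Ξ_ρ`. -/
theorem equivariant_iff_tau_beta (ρ : G1 → G1) (hρ : IsGHom ρ) (τ : ℂ → ℂ) :
    (∀ (g : G1) (z : ℂ), τ (Gact g z) = Gact (ρ g) (τ z)) ↔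
      ∃ β ∈ Xi ρ, ∀ z : ℂ, τ z = Gact (ρ ((1 : Circle), z)) β := by
  constructor
  · intro hτ
    refine ⟨τ 0, ?_, ?_⟩
    · intro a
      have h := hτ (a, 0) 0
      simpa [Gact] using h.symm
    · intro z
      have h := hτ ((1 : Circle), z) 0
      simpa [Gact] using h
  · rintro ⟨β, hβ, hτ⟩ g z
    have hact : ∀ (g h : G1) (w : ℂ), Gact (Gmul g h) w = Gact g (Gact h w) := by
      intro g h w; simp [Gact, Gmul]; ring
    have h1 : Gmul g ((1 : Circle), z) = (g.1, Gact g z) := by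
      simp [Gmul, Gact]
    have h3 : (g.1, Gact g z) = Gmul ((1 : Circle), Gact g z) (g.1, (0:ℂ)) := by
      simp [Gmul]
    calc τ (Gact g z) = Gact (ρ ((1 : Circle), Gact g z)) β := hτ _
      _ = Gact (ρ ((1 : Circle), Gact g z)) (Gact (ρ (g.1, 0)) β) := by rw [hβ g.1]
      _ = Gact (Gmul (ρ ((1 : Circle), Gact g z)) (ρ (g.1, 0))) β := (hact _ _ _).symm
      _ = Gact (ρ (Gmul ((1 : Circle), Gact g z) (g.1, 0))) β := by rw [hρ]
      _ = Gact (ρ (Gmul g ((1 : Circle), z))) β := by rw [h1, ← h3]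
      _ = Gact (Gmul (ρ g) (ρ ((1 : Circle), z))) β := by rw [hρ]
      _ = Gact (ρ g) (Gact (ρ ((1 : Circle), z)) β) := hact _ _ _
      _ = Gact (ρ g) (τ z) := by rw [← hτ]
end
end

section
/- Let ρ̃ : U(1) → U(1) and τ̃ : ℂ → ℂ be maps, suppose that ρ : G → G defined by ρ([a,b]) := [ρ̃(a), τ̃(b)] is a group homomorphism, and let τ : ℂ → ℂ satisfy the equivariance condition τ(g·z) = ρ(g)·τ(z) for all g ∈ G, z ∈ ℂ. Then: (1) τ̃(ab + c) = ρ̃(a)·τ̃(b) + τ̃(c) for all a ∈ U(1) and b, c ∈ ℂ (in particular τ̃ is additive); (2) there exists β ∈ ℂ such that τ(z) = τ̃(z) + β for all z ∈ ℂ; and (3) if β ≠ 0 then ρ̃(a) = 1 for every a ∈ U(1), so that τ̃(ab + c) = τ̃(b) + τ̃(c) for all a ∈ U(1), b, c ∈ ℂ. -/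
open Complex MeasureTheory ComplexConjugate

noncomputable section

/-- structure of equivariant pairs `(ρ̃ ⋉ τ̃, τ)` with separated variables. -/
theorem equivariant_separated_variables (ρt : Circle → Circle) (τt : ℂ → ℂ)
    (hρ : IsGHom (fun g : G1 => (ρt g.1, τt g.2)))
    (τ : ℂ → ℂ)
    (hτ : ∀ (g : G1) (z : ℂ), τ (Gact g z) = Gact (ρt g.1, τt g.2) (τ z)) :
    (∀ (a : Circle) (b c : ℂ), τt ((a : ℂ) * b + c) = (ρt a : ℂ) * τt b + τt c) ∧
    ∃ β : ℂ, (∀ z : ℂ, τ z = τt z + β) ∧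
      (β ≠ 0 → (∀ a : Circle, ρt a = 1) ∧
        ∀ (a : Circle) (b c : ℂ), τt ((a : ℂ) * b + c) = τt b + τt c) := by
  have key : ∀ (a : Circle) (b c : ℂ), τt ((a : ℂ) * b + c) = (ρt a : ℂ) * τt b + τt c := by
    intro a b c
    have h := congrArg Prod.snd (hρ (a, c) (1, b))
    simpa [Gmul] using h
  have hρ1 : ρt 1 = 1 := by
    have h := congrArg Prod.fst (hρ ((1 : Circle), (0 : ℂ)) ((1 : Circle), (0 : ℂ)))
    simp [Gmul] at h
    exact h
  have hτt0 : τt 0 = 0 := by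
    have h := key 1 0 0
    simp [hρ1] at h
    exact h
  have htrans : ∀ w : ℂ, τ w = τt w + τ 0 := by
    intro w
    have h := hτ ((1 : Circle), w) 0
    simpa [Gact, hρ1, add_comm] using h
  refine ⟨key, τ 0, htrans, ?_⟩
  intro hβ
  have hrot : ∀ a : Circle, ρt a = 1 := by
    intro a
    have h := hτ (a, (0 : ℂ)) 0
    simp [Gact, hτt0] at h
    have hcoe : (ρt a : ℂ) = 1 := by
      have h2 : (ρt a : ℂ) * τ 0 = 1 * τ 0 := by rw [one_mul]; exact h.symm
      exact mul_right_cancel₀ hβ h2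
    exact Circle.ext hcoe
  refine ⟨hrot, fun a b c => ?_⟩
  rw [key a b c, hrot a]
  simp
end
end

section
/- Let (ρ,τ) be an equivariant pair with τ of class C^∞ and let ν, μ ∈ ℝ. Define J(g,z) := j^ν(g,z)·j^μ(ρ(g),τ(z)) and the operator (T_g f)(z) := conj(J(g,z))·f(g·z). Then for every g ∈ G and every C^∞ function f : ℂ → ℂ, Δ^{ν,μ}_τ (T_g f) = T_g (Δ^{ν,μ}_τ f). -/
open Complex MeasureTheory ComplexConjugate

noncomputable section

/-! ### Auxiliary Wirtinger calculus API -/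

lemma wdz_eq_of_rep {f : ℂ → ℂ} {z p q : ℂ}
    (h : ∀ v, fderiv ℝ f z v = p * v + q * conj v) :
    wdz f z = p ∧ wdzbar f z = q := by
  have h1 := h 1
  have hI := h Complex.I
  simp only [map_one, Complex.conj_I] at h1 hI
  constructor
  · rw [wdz, h1, hI]; linear_combination ((q - p)/2) * Complex.I_sq
  · rw [wdzbar, h1, hI]; linear_combination ((p - q)/2) * Complex.I_sq

lemma wirtinger_rep (f : ℂ → ℂ) (z : ℂ) (v : ℂ) :
    fderiv ℝ f z v = wdz f z * v + wdzbar f z * conj v := by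
  have h1 : v + conj v = 2 * (v.re : ℂ) := by rw [Complex.add_conj]; push_cast; ring
  have h2 : v - conj v = 2 * (v.im : ℂ) * Complex.I := by rw [Complex.sub_conj]; push_cast; ring
  have hv : ((v.re : ℝ) • (1:ℂ) + (v.im : ℝ) • Complex.I) = v := by
    rw [Complex.real_smul, Complex.real_smul, mul_one, Complex.re_add_im]
  calc fderiv ℝ f z v = fderiv ℝ f z ((v.re : ℝ) • (1:ℂ) + (v.im : ℝ) • Complex.I) := by rw [hv]
  _ = (v.re : ℝ) • fderiv ℝ f z 1 + (v.im : ℝ) • fderiv ℝ f z Complex.I := by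
      rw [map_add, (fderiv ℝ f z).map_smul, (fderiv ℝ f z).map_smul]
  _ = wdz f z * v + wdzbar f z * conj v := by
      rw [wdz, wdzbar, Complex.real_smul, Complex.real_smul]
      linear_combination (-(fderiv ℝ f z 1) / 2) * h1 + (Complex.I * fderiv ℝ f z Complex.I / 2) * h2
        + ((v.im : ℂ) * fderiv ℝ f z Complex.I) * Complex.I_sq

lemma wdz_mul {f g : ℂ → ℂ} {z : ℂ} (hf : DifferentiableAt ℝ f z)
    (hg : DifferentiableAt ℝ g z) :
    wdz (fun w => f w * g w) z = wdz f z * g z + f z * wdz g z ∧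
    wdzbar (fun w => f w * g w) z = wdzbar f z * g z + f z * wdzbar g z := by
  apply wdz_eq_of_rep
  intro v
  rw [fderiv_fun_mul hf hg]
  simp only [ContinuousLinearMap.add_apply, ContinuousLinearMap.smul_apply, smul_eq_mul]
  rw [wirtinger_rep f z v, wirtinger_rep g z v]
  ring

lemma wdz_const (c : ℂ) (z : ℂ) :
    wdz (fun _ => c) z = 0 ∧ wdzbar (fun _ => c) z = 0 := by
  apply wdz_eq_of_rep
  intro v
  rw [fderiv_fun_const]
  simp

lemma wdz_add {f g : ℂ → ℂ} {z : ℂ} (hf : DifferentiableAt ℝ f z)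
    (hg : DifferentiableAt ℝ g z) :
    wdz (fun w => f w + g w) z = wdz f z + wdz g z ∧
    wdzbar (fun w => f w + g w) z = wdzbar f z + wdzbar g z := by
  apply wdz_eq_of_rep
  intro v
  rw [fderiv_fun_add hf hg]
  simp only [ContinuousLinearMap.add_apply]
  rw [wirtinger_rep f z v, wirtinger_rep g z v]
  ring

/-- `wdz`/`wdzbar` of `α f + β`. -/
lemma wdz_cma {f : ℂ → ℂ} {z : ℂ} (hf : DifferentiableAt ℝ f z) (α β : ℂ) :
    wdz (fun w => α * f w + β) z = α * wdz f z ∧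
    wdzbar (fun w => α * f w + β) z = α * wdzbar f z := by
  apply wdz_eq_of_rep
  intro v
  rw [fderiv_add_const, fderiv_const_mul hf]
  simp only [ContinuousLinearMap.smul_apply, smul_eq_mul]
  rw [wirtinger_rep f z v]
  ring

lemma wdz_conj_comp (f : ℂ → ℂ) (z : ℂ) :
    wdz (fun w => conj (f w)) z = conj (wdzbar f z) ∧
    wdzbar (fun w => conj (f w)) z = conj (wdz f z) := by
  by_cases hf : DifferentiableAt ℝ f z
  · apply wdz_eq_of_rep
    intro v
    have h0 : (fun w => conj (f w)) = (Complex.conjCLE : ℂ → ℂ) ∘ f := rfl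
    rw [h0, fderiv_comp z (Complex.conjCLE.differentiable.differentiableAt) hf,
      Complex.conjCLE.fderiv]
    simp only [ContinuousLinearMap.coe_comp', Function.comp_apply,
      ContinuousLinearEquiv.coe_coe, Complex.conjCLE_apply]
    rw [wirtinger_rep f z v]
    rw [map_add, map_mul, map_mul]
    simp only [Complex.conj_conj]
    ring
  · have hnc : ¬ DifferentiableAt ℝ (fun w => conj (f w)) z := by
      intro h
      apply hf
      have h2 := (Complex.conjCLE.differentiable.differentiableAt).comp z h
      have h3 : (⇑Complex.conjCLE ∘ fun w => conj (f w)) = f := by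
        funext w; simp
      rwa [h3] at h2
    rw [wdz, wdzbar, wdz, wdzbar, fderiv_zero_of_not_differentiableAt hf,
      fderiv_zero_of_not_differentiableAt hnc]
    simp

lemma wdz_exp_comp {f : ℂ → ℂ} {z : ℂ} (hf : DifferentiableAt ℝ f z) :
    wdz (fun w => Complex.exp (f w)) z = Complex.exp (f z) * wdz f z ∧
    wdzbar (fun w => Complex.exp (f w)) z = Complex.exp (f z) * wdzbar f z := by
  apply wdz_eq_of_rep
  intro v
  have hexp : HasFDerivAt Complex.exp
      (((ContinuousLinearMap.id ℂ ℂ).smulRight (Complex.exp (f z))).restrictScalars ℝ) (f z) :=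
    ((Complex.hasDerivAt_exp (f z)).hasFDerivAt).restrictScalars ℝ
  have hcomp : HasFDerivAt (fun w => Complex.exp (f w))
      ((((ContinuousLinearMap.id ℂ ℂ).smulRight (Complex.exp (f z))).restrictScalars ℝ).comp
        (fderiv ℝ f z)) z := hexp.comp z hf.hasFDerivAt
  rw [hcomp.fderiv]
  simp only [ContinuousLinearMap.coe_comp', Function.comp_apply,
    ContinuousLinearMap.coe_restrictScalars', ContinuousLinearMap.smulRight_apply,
    ContinuousLinearMap.id_apply, smul_eq_mul]
  rw [wirtinger_rep f z v]
  ring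

lemma wdz_affine_comp (f : ℂ → ℂ) {z : ℂ} (a b : ℂ) (hf : DifferentiableAt ℝ f (a*z+b)) :
    wdz (fun w => f (a*w + b)) z = a * wdz f (a*z+b) ∧
    wdzbar (fun w => f (a*w + b)) z = conj a * wdzbar f (a*z+b) := by
  apply wdz_eq_of_rep
  intro v
  have haff : HasFDerivAt (fun w : ℂ => a*w + b)
      (((ContinuousLinearMap.id ℂ ℂ).smulRight a).restrictScalars ℝ) z := by
    have h0 : HasDerivAt (fun w : ℂ => a*w + b) a z := by
      simpa using ((hasDerivAt_id z).const_mul a).add_const b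
    exact h0.hasFDerivAt.restrictScalars ℝ
  have hcomp : HasFDerivAt (fun w => f (a*w + b))
      ((fderiv ℝ f (a*z+b)).comp
        (((ContinuousLinearMap.id ℂ ℂ).smulRight a).restrictScalars ℝ)) z :=
    (hf.hasFDerivAt).comp z haff
  rw [hcomp.fderiv]
  simp only [ContinuousLinearMap.coe_comp', Function.comp_apply,
    ContinuousLinearMap.coe_restrictScalars', ContinuousLinearMap.smulRight_apply,
    ContinuousLinearMap.id_apply, smul_eq_mul]
  rw [wirtinger_rep f (a*z+b) (v * a)]
  rw [map_mul]
  ring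

lemma contDiff_wdz {f : ℂ → ℂ} (hf : ContDiff ℝ (⊤:ℕ∞) f) :
    ContDiff ℝ (⊤:ℕ∞) (wdz f) ∧ ContDiff ℝ (⊤:ℕ∞) (wdzbar f) := by
  have hD : ContDiff ℝ (⊤:ℕ∞) (fderiv ℝ f) := hf.fderiv_right (by simp)
  have h1 : ContDiff ℝ (⊤:ℕ∞) (fun z => fderiv ℝ f z 1) := hD.clm_apply contDiff_const
  have hI : ContDiff ℝ (⊤:ℕ∞) (fun z => fderiv ℝ f z Complex.I) := hD.clm_apply contDiff_const
  constructor
  · exact contDiff_const.mul (h1.sub (contDiff_const.mul hI))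
  · exact contDiff_const.mul (h1.add (contDiff_const.mul hI))

lemma ContDiffTop.diff {f : ℂ → ℂ} (hf : ContDiff ℝ (⊤:ℕ∞) f) : Differentiable ℝ f :=
  hf.differentiable (by simp)

lemma contDiff_conj_comp {f : ℂ → ℂ} (hf : ContDiff ℝ (⊤:ℕ∞) f) :
    ContDiff ℝ (⊤:ℕ∞) (fun w => conj (f w)) := by
  have h0 : (fun w => conj (f w)) = fun w => (Complex.conjCLE : ℂ →L[ℝ] ℂ) (f w) := rfl
  rw [h0]
  exact (Complex.conjCLE : ℂ →L[ℝ] ℂ).contDiff.comp hf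

lemma wdz_wdzbar_comm {f : ℂ → ℂ} (hf : ContDiff ℝ (⊤:ℕ∞) f) (z : ℂ) :
    wdz (wdzbar f) z = wdzbar (wdz f) z := by
  have hsymm : IsSymmSndFDerivAt ℝ f z :=
    hf.contDiffAt.isSymmSndFDerivAt (by simp [minSmoothness_of_isRCLikeNormedField]; exact WithTop.coe_le_coe.mpr (le_top : (2:ℕ∞) ≤ ⊤))
  set F'' := fderiv ℝ (fderiv ℝ f) z with hF''
  have hD : ContDiff ℝ (⊤:ℕ∞) (fderiv ℝ f) := hf.fderiv_right (by simp)
  have hDF : HasFDerivAt (fderiv ℝ f) F'' z :=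
    (hD.differentiable (by simp) z).hasFDerivAt
  have happ : ∀ c : ℂ, HasFDerivAt (fun y => fderiv ℝ f y c)
      ((ContinuousLinearMap.apply ℝ ℂ c).comp F'') z := fun c =>
    (ContinuousLinearMap.apply ℝ ℂ c).hasFDerivAt.comp z hDF
  have hbar : HasFDerivAt (wdzbar f)
      ((1/2 : ℂ) • (((ContinuousLinearMap.apply ℝ ℂ 1).comp F'') +
        Complex.I • ((ContinuousLinearMap.apply ℝ ℂ Complex.I).comp F''))) z := by
    exact ((happ 1).add ((happ Complex.I).const_mul Complex.I)).const_mul (1/2 : ℂ)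
  have hz : HasFDerivAt (wdz f)
      ((1/2 : ℂ) • (((ContinuousLinearMap.apply ℝ ℂ 1).comp F'') -
        Complex.I • ((ContinuousLinearMap.apply ℝ ℂ Complex.I).comp F''))) z := by
    exact ((happ 1).sub ((happ Complex.I).const_mul Complex.I)).const_mul (1/2 : ℂ)
  rw [wdz, wdzbar, hbar.fderiv, hz.fderiv]
  simp only [ContinuousLinearMap.smul_apply, ContinuousLinearMap.add_apply,
    ContinuousLinearMap.sub_apply, ContinuousLinearMap.coe_comp', Function.comp_apply,
    ContinuousLinearMap.apply_apply, smul_eq_mul]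
  have h1 := hsymm 1 Complex.I
  rw [← hF''] at h1
  linear_combination (1/2 : ℂ) * Complex.I * h1

/-! ### Harmonicity of `τ` -/

/-- For an equivariant pair, `∂τ/∂z̄` is a constant function. -/
lemma wdzbar_tau_const {ρ : G1 → G1} {τ : ℂ → ℂ} (hequiv : Equivariant ρ τ)
    (hτ : ContDiff ℝ (⊤:ℕ∞) τ) (z : ℂ) : wdzbar τ z = wdzbar τ 0 := by
  obtain ⟨hhom, hact⟩ := hequiv
  have hdτ : Differentiable ℝ τ := ContDiffTop.diff hτ
  set Ac : ℂ → ℂ := fun c => (((ρ (1, c)).1 : Circle) : ℂ) with hAc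
  have t1 : ∀ c w, τ (w + c) = Ac c * τ w + (ρ (1, c)).2 := by
    intro c w
    have h := hact (1, c) w
    simpa [Gact] using h
  have q1 : ∀ c w, wdzbar τ (w + c) = Ac c * wdzbar τ w := by
    intro c w
    have h1 := (wdz_affine_comp τ (z := w) 1 c (hdτ _)).2
    have h2 : (fun x => τ (1*x + c)) = (fun x => Ac c * τ x + (ρ (1, c)).2) := by
      funext x; rw [one_mul, t1]
    rw [h2, (wdz_cma (hdτ w) _ _).2] at h1
    rw [one_mul] at h1
    simpa using h1.symm
  have hq : ∀ w, wdzbar τ w = Ac w * wdzbar τ 0 := by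
    intro w
    have := q1 w 0
    simpa using this
  by_cases h0 : wdzbar τ 0 = 0
  · rw [hq z, hq 0, h0, mul_zero, mul_zero]
  · -- rotations
    set χ : Circle → ℂ := fun r => (((ρ (r, 0)).1 : Circle) : ℂ) with hχdef
    have t2 : ∀ (r : Circle) w, τ ((r:ℂ) * w) = χ r * τ w + (ρ (r, 0)).2 := by
      intro r w
      have h := hact (r, 0) w
      simpa [Gact] using h
    have q2 : ∀ (r : Circle) w, conj (r:ℂ) * wdzbar τ ((r:ℂ)*w) = χ r * wdzbar τ w := by
      intro r w
      have h1 := (wdz_affine_comp τ (z := w) (r:ℂ) 0 (hdτ _)).2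
      have h2 : (fun x => τ ((r:ℂ)*x + 0)) = (fun x => χ r * τ x + (ρ (r, 0)).2) := by
        funext x; rw [add_zero, t2]
      rw [h2, (wdz_cma (hdτ w) _ _).2] at h1
      rw [add_zero] at h1
      exact h1.symm
    have hχ1 : ∀ r : Circle, χ r = conj (r:ℂ) := by
      intro r
      have h := q2 r 0
      rw [mul_zero] at h
      exact (mul_right_cancel₀ h0 h).symm
    have hA_rot : ∀ (r : Circle) (w : ℂ), Ac ((r:ℂ) * w) = Ac w := by
      intro r w
      have h := q2 r w
      rw [hq ((r:ℂ)*w), hq w, hχ1 r] at h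
      have hr : conj (r:ℂ) ≠ 0 := by
        simpa using r.coe_ne_zero
      field_simp at h
      exact h
    have hAhom : ∀ c c', Ac (c' + c) = Ac c * Ac c' := by
      intro c c'
      have h := hhom (1, c) (1, c')
      have h2 : Gmul (1, c) (1, c') = ((1 : Circle), c' + c) := by
        simp [Gmul]
      rw [h2] at h
      have h3 := congrArg (fun x : G1 => ((x.1 : Circle) : ℂ)) h
      simpa [Gmul, hAc] using h3
    have hA0 : Ac 0 = 1 := by
      have h := hAhom 0 0
      rw [add_zero] at h
      have hne : Ac 0 ≠ 0 := Circle.coe_ne_zero _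
      field_simp at h
      exact h.symm
    have hAneg : ∀ c, Ac (-c) = Ac c := by
      intro c
      have hm : ((-1 : ℂ) ∈ Metric.sphere (0:ℂ) 1) := by simp
      have h := hA_rot ⟨-1, hm⟩ c
      simpa [neg_one_mul] using h
    have hAsq : ∀ c, Ac c * Ac c = 1 := by
      intro c
      have h := hAhom c (-c)
      rw [neg_add_cancel, hA0, hAneg] at h
      exact h.symm
    have hA1 : ∀ c, Ac c = 1 := by
      intro c
      have h := hAhom (c/2) (c/2)
      rw [add_halves] at h
      rw [h, hAsq]
    rw [hq z, hA1, one_mul]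

lemma tau_harm {ρ : G1 → G1} {τ : ℂ → ℂ} (hequiv : Equivariant ρ τ)
    (hτ : ContDiff ℝ (⊤:ℕ∞) τ) (z : ℂ) : wdz (wdzbar τ) z = 0 := by
  have h : wdzbar τ = fun _ => wdzbar τ 0 := funext (wdzbar_tau_const hequiv hτ)
  rw [h]
  exact (wdz_const _ _).1

lemma tau_harm' {ρ : G1 → G1} {τ : ℂ → ℂ} (hequiv : Equivariant ρ τ)
    (hτ : ContDiff ℝ (⊤:ℕ∞) τ) (z : ℂ) : wdzbar (wdz τ) z = 0 := by
  rw [← wdz_wdzbar_comm hτ z]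
  exact tau_harm hequiv hτ z

-- PART 2: continuation (to be appended after harmonicity lemmas)

/-! ### More pointwise rules -/

lemma wdz_sub {f g : ℂ → ℂ} {z : ℂ} (hf : DifferentiableAt ℝ f z)
    (hg : DifferentiableAt ℝ g z) :
    wdz (fun w => f w - g w) z = wdz f z - wdz g z ∧
    wdzbar (fun w => f w - g w) z = wdzbar f z - wdzbar g z := by
  apply wdz_eq_of_rep
  intro v
  rw [fderiv_fun_sub hf hg]
  simp only [ContinuousLinearMap.sub_apply]
  rw [wirtinger_rep f z v, wirtinger_rep g z v]
  ring

lemma wdz_const_mul {f : ℂ → ℂ} {z : ℂ} (hf : DifferentiableAt ℝ f z) (c : ℂ) :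
    wdz (fun w => c * f w) z = c * wdz f z ∧
    wdzbar (fun w => c * f w) z = c * wdzbar f z := by
  apply wdz_eq_of_rep
  intro v
  rw [fderiv_const_mul hf]
  simp only [ContinuousLinearMap.smul_apply, smul_eq_mul]
  rw [wirtinger_rep f z v]
  ring

lemma abs_sq_c (x : ℂ) : ((‖x‖ : ℝ) : ℂ)^2 = x * conj x := by
  rw [← Complex.ofReal_pow, Complex.sq_norm, Complex.mul_conj]

/-- Wirtinger derivatives of `k₁ x + k₂ x̄ + k₃ h(x) + k₄ conj(h(x))`. -/
lemma wdz_lin4 {h : ℂ → ℂ} {w : ℂ} (hd : DifferentiableAt ℝ h w) (k₁ k₂ k₃ k₄ : ℂ) :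
    wdz (fun x => k₁*x + k₂*conj x + k₃*h x + k₄*conj (h x)) w
      = k₁ + k₃ * wdz h w + k₄ * conj (wdzbar h w) ∧
    wdzbar (fun x => k₁*x + k₂*conj x + k₃*h x + k₄*conj (h x)) w
      = k₂ + k₃ * wdzbar h w + k₄ * conj (wdz h w) := by
  apply wdz_eq_of_rep
  intro v
  have hx : HasFDerivAt (fun x : ℂ => x) (ContinuousLinearMap.id ℝ ℂ) w := hasFDerivAt_id w
  have hcj : HasFDerivAt (fun x : ℂ => conj x) (Complex.conjCLE : ℂ →L[ℝ] ℂ) w :=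
    (Complex.conjCLE : ℂ →L[ℝ] ℂ).hasFDerivAt
  have hch : HasFDerivAt (fun x => conj (h x))
      ((Complex.conjCLE : ℂ →L[ℝ] ℂ).comp (fderiv ℝ h w)) w :=
    (Complex.conjCLE : ℂ →L[ℝ] ℂ).hasFDerivAt.comp w hd.hasFDerivAt
  have H : HasFDerivAt (fun x => k₁*x + k₂*conj x + k₃*h x + k₄*conj (h x))
      (((k₁ • ContinuousLinearMap.id ℝ ℂ
          + k₂ • (Complex.conjCLE : ℂ →L[ℝ] ℂ))
          + k₃ • fderiv ℝ h w)
          + k₄ • ((Complex.conjCLE : ℂ →L[ℝ] ℂ).comp (fderiv ℝ h w))) w :=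
    (((hx.const_mul k₁).add (hcj.const_mul k₂)).add
      ((hd.hasFDerivAt).const_mul k₃)).add (hch.const_mul k₄)
  rw [H.fderiv]
  simp only [ContinuousLinearMap.add_apply, ContinuousLinearMap.smul_apply,
    ContinuousLinearMap.id_apply, ContinuousLinearMap.coe_comp', Function.comp_apply,
    ContinuousLinearEquiv.coe_coe, Complex.conjCLE_apply, smul_eq_mul]
  rw [wirtinger_rep h w v]
  rw [map_add, map_mul, map_mul]
  simp only [Complex.conj_conj]
  ring

/-! ### The multiplier `ℓ` -/

/-- The logarithm of the conjugated automorphy factor. -/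
def ellfun (ν μ : ℝ) (τ : ℂ → ℂ) (a b A Bc : ℂ) : ℂ → ℂ :=
  fun x => ((ν:ℂ)/2 * -(a*conj b))*x + (-((ν:ℂ)/2)*conj (-(a*conj b)))*conj x
    + ((μ:ℂ)/2 * -(A*conj Bc))*τ x + (-((μ:ℂ)/2)*conj (-(A*conj Bc)))*conj (τ x)

lemma ellfun_wdz {τ : ℂ → ℂ} (ν μ : ℝ) (a b A Bc : ℂ) {w : ℂ}
    (hd : DifferentiableAt ℝ τ w) :
    wdz (ellfun ν μ τ a b A Bc) w
      = (ν:ℂ)/2 * -(a*conj b) + ((μ:ℂ)/2 * -(A*conj Bc)) * wdz τ w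
        + (-((μ:ℂ)/2)*conj (-(A*conj Bc))) * conj (wdzbar τ w) ∧
    wdzbar (ellfun ν μ τ a b A Bc) w
      = -((ν:ℂ)/2)*conj (-(a*conj b)) + ((μ:ℂ)/2 * -(A*conj Bc)) * wdzbar τ w
        + (-((μ:ℂ)/2)*conj (-(A*conj Bc))) * conj (wdz τ w) :=
  wdz_lin4 hd _ _ _ _

lemma contDiff_ellfun {τ : ℂ → ℂ} (hτ : ContDiff ℝ (⊤:ℕ∞) τ) (ν μ : ℝ) (a b A Bc : ℂ) :
    ContDiff ℝ (⊤:ℕ∞) (ellfun ν μ τ a b A Bc) := by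
  have hconjid : ContDiff ℝ (⊤:ℕ∞) (fun x : ℂ => conj x) := contDiff_conj_comp contDiff_id
  exact (((contDiff_const.mul contDiff_id).add (contDiff_const.mul hconjid)).add
    (contDiff_const.mul hτ)).add (contDiff_const.mul (contDiff_conj_comp hτ))

/-! ### Transformation laws -/

lemma wdz_tau_phi {τ : ℂ → ℂ} (hτ : ContDiff ℝ (⊤:ℕ∞) τ) {a b A Bc : ℂ}
    (hτφ : ∀ w, τ (a*w+b) = A * τ w + Bc) (haa : a * conj a = 1) (w : ℂ) :
    wdz τ (a*w+b) = conj a * A * wdz τ w ∧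
    wdzbar τ (a*w+b) = a * A * wdzbar τ w := by
  have hdτ := ContDiffTop.diff hτ
  have hfun : (fun x => τ (a*x+b)) = fun x => A * τ x + Bc := funext hτφ
  have h1 : wdz (fun x => τ (a*x+b)) w = a * wdz τ (a*w+b) := (wdz_affine_comp τ (z := w) a b (hdτ _)).1
  have h2 : wdz (fun x => τ (a*x+b)) w = A * wdz τ w := by
    rw [hfun]; exact (wdz_cma (hdτ w) A Bc).1
  have h3 : a * wdz τ (a*w+b) = A * wdz τ w := h1.symm.trans h2
  have h1' : wdzbar (fun x => τ (a*x+b)) w = conj a * wdzbar τ (a*w+b) :=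
    (wdz_affine_comp τ (z := w) a b (hdτ _)).2
  have h2' : wdzbar (fun x => τ (a*x+b)) w = A * wdzbar τ w := by
    rw [hfun]; exact (wdz_cma (hdτ w) A Bc).2
  have h3' : conj a * wdzbar τ (a*w+b) = A * wdzbar τ w := h1'.symm.trans h2'
  constructor
  · linear_combination (conj a) * h3 - (wdz τ (a*w+b)) * haa
  · linear_combination a * h3' - (wdzbar τ (a*w+b)) * haa

-- PART 3

lemma Sfun_eq {τ : ℂ → ℂ} (ν μ : ℝ) (w : ℂ) :
    Sfun ν μ τ w = (ν:ℂ)*w + (μ:ℂ)*(τ w * conj (wdz τ w) - conj (τ w) * wdzbar τ w) := by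
  rw [Sfun, (wdz_conj_comp τ w).2]

lemma contDiff_Sfun {τ : ℂ → ℂ} (hτ : ContDiff ℝ (⊤:ℕ∞) τ) (ν μ : ℝ) :
    ContDiff ℝ (⊤:ℕ∞) (Sfun ν μ τ) := by
  have hfun : Sfun ν μ τ
      = fun w => (ν:ℂ)*w + (μ:ℂ)*(τ w * conj (wdz τ w) - conj (τ w) * wdzbar τ w) :=
    funext (Sfun_eq ν μ)
  rw [hfun]
  exact (contDiff_const.mul contDiff_id).add (contDiff_const.mul
    ((hτ.mul (contDiff_conj_comp (contDiff_wdz hτ).1)).sub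
      ((contDiff_conj_comp hτ).mul (contDiff_wdz hτ).2)))

/-- `∂S/∂z` is the magnetic field (using harmonicity of `τ`). -/
lemma wdz_Sfun {ρ : G1 → G1} {τ : ℂ → ℂ} (hequiv : Equivariant ρ τ)
    (hτ : ContDiff ℝ (⊤:ℕ∞) τ) (ν μ : ℝ) (w : ℂ) :
    wdz (Sfun ν μ τ) w = ((Bfield ν μ τ w : ℝ) : ℂ) := by
  have hdτ := ContDiffTop.diff hτ
  have hp_cd := (contDiff_wdz hτ).1
  have hq_cd := (contDiff_wdz hτ).2
  have dcp : DifferentiableAt ℝ (fun x => conj (wdz τ x)) w :=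
    ContDiffTop.diff (contDiff_conj_comp hp_cd) w
  have dct : DifferentiableAt ℝ (fun x => conj (τ x)) w :=
    ContDiffTop.diff (contDiff_conj_comp hτ) w
  have d1 : DifferentiableAt ℝ (fun x => τ x * conj (wdz τ x)) w := (hdτ w).mul dcp
  have d2 : DifferentiableAt ℝ (fun x => conj (τ x) * wdzbar τ x) w :=
    dct.mul (ContDiffTop.diff hq_cd w)
  have hfun : Sfun ν μ τ
      = fun x => (ν:ℂ)*x + (μ:ℂ)*(τ x * conj (wdz τ x) - conj (τ x) * wdzbar τ x) :=
    funext (Sfun_eq ν μ)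
  -- build the derivative by hand
  have hx : HasFDerivAt (fun x : ℂ => x) (ContinuousLinearMap.id ℝ ℂ) w := hasFDerivAt_id w
  have H : HasFDerivAt (fun x => (ν:ℂ)*x + (μ:ℂ)*(τ x * conj (wdz τ x) - conj (τ x) * wdzbar τ x))
      ((ν:ℂ) • ContinuousLinearMap.id ℝ ℂ
        + (μ:ℂ) • (fderiv ℝ (fun x => τ x * conj (wdz τ x) - conj (τ x) * wdzbar τ x) w)) w :=
    (hx.const_mul (ν:ℂ)).add (((d1.sub d2).hasFDerivAt).const_mul (μ:ℂ))
  have hrep : ∀ v, fderiv ℝ (Sfun ν μ τ) w v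
      = (((ν:ℂ) + (μ:ℂ)*(wdz (fun x => τ x * conj (wdz τ x)) w
          - wdz (fun x => conj (τ x) * wdzbar τ x) w))) * v
        + ((μ:ℂ)*(wdzbar (fun x => τ x * conj (wdz τ x)) w
          - wdzbar (fun x => conj (τ x) * wdzbar τ x) w)) * conj v := by
    intro v
    rw [hfun, H.fderiv]
    simp only [ContinuousLinearMap.add_apply, ContinuousLinearMap.smul_apply,
      ContinuousLinearMap.id_apply, smul_eq_mul]
    rw [wirtinger_rep (fun x => τ x * conj (wdz τ x) - conj (τ x) * wdzbar τ x) w v,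
      (wdz_sub d1 d2).1, (wdz_sub d1 d2).2]
    ring
  rw [(wdz_eq_of_rep hrep).1]
  have e1 : wdz (fun x => τ x * conj (wdz τ x)) w
      = wdz τ w * conj (wdz τ w) + τ w * conj (wdzbar (wdz τ) w) := by
    rw [(wdz_mul (hdτ w) dcp).1, (wdz_conj_comp (wdz τ) w).1]
  have e2 : wdz (fun x => conj (τ x) * wdzbar τ x) w
      = conj (wdzbar τ w) * wdzbar τ w + conj (τ w) * wdz (wdzbar τ) w := by
    rw [(wdz_mul dct (ContDiffTop.diff hq_cd w)).1, (wdz_conj_comp τ w).1]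
  rw [e1, e2, tau_harm hequiv hτ w, tau_harm' hequiv hτ w, map_zero]
  rw [Bfield]
  push_cast
  rw [abs_sq_c, abs_sq_c]
  ring

lemma wdzbar_Sbar {ρ : G1 → G1} {τ : ℂ → ℂ} (hequiv : Equivariant ρ τ)
    (hτ : ContDiff ℝ (⊤:ℕ∞) τ) (ν μ : ℝ) (w : ℂ) :
    wdzbar (fun x => conj (Sfun ν μ τ x)) w = ((Bfield ν μ τ w : ℝ) : ℂ) := by
  rw [(wdz_conj_comp (Sfun ν μ τ) w).2, wdz_Sfun hequiv hτ ν μ w, Complex.conj_ofReal]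

/-- Operator identity: `Δ^{ν,μ}_τ F = A₁ (A₂ F) + 2B F` (given harmonicity of `τ`). -/
lemma deltaTau_decomp {ρ : G1 → G1} {τ : ℂ → ℂ} (hequiv : Equivariant ρ τ)
    (hτ : ContDiff ℝ (⊤:ℕ∞) τ) (ν μ : ℝ) (F : ℂ → ℂ) (hF : ContDiff ℝ (⊤:ℕ∞) F) (w : ℂ) :
    DeltaTau ν μ τ F w
      = (2 * wdzbar (fun x => 2 * wdz F x - conj (Sfun ν μ τ x) * F x) w
          + Sfun ν μ τ w * (2 * wdz F w - conj (Sfun ν μ τ w) * F w))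
        + 2 * ((Bfield ν μ τ w : ℝ) : ℂ) * F w := by
  have hdF := ContDiffTop.diff hF
  have hwF_cd := (contDiff_wdz hF).1
  have dwdzF : DifferentiableAt ℝ (wdz F) w := ContDiffTop.diff hwF_cd w
  have dconjS : DifferentiableAt ℝ (fun x => conj (Sfun ν μ τ x)) w :=
    ContDiffTop.diff (contDiff_conj_comp (contDiff_Sfun hτ ν μ)) w
  have d1 : DifferentiableAt ℝ (fun x => 2 * wdz F x) w := dwdzF.const_mul 2
  have d2 : DifferentiableAt ℝ (fun x => conj (Sfun ν μ τ x) * F x) w := dconjS.mul (hdF w)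
  have e0 : lap (fun x => conj (τ x)) w = 0 := by
    rw [lap]
    have h1 : wdzbar (fun x => conj (τ x)) = fun x => conj (wdz τ x) :=
      funext fun x => (wdz_conj_comp τ x).2
    rw [h1, (wdz_conj_comp (wdz τ) w).1, tau_harm' hequiv hτ w, map_zero, mul_zero]
  have e1 : lap τ w = 0 := by rw [lap, tau_harm hequiv hτ w, mul_zero]
  have e2 : lap F w = 4 * wdzbar (wdz F) w := by rw [lap, wdz_wdzbar_comm hF w]
  have e3 : wdzbar (fun x => 2 * wdz F x - conj (Sfun ν μ τ x) * F x) w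
      = wdzbar (fun x => 2 * wdz F x) w - wdzbar (fun x => conj (Sfun ν μ τ x) * F x) w :=
    (wdz_sub d1 d2).2
  have e4 : wdzbar (fun x => 2 * wdz F x) w = 2 * wdzbar (wdz F) w :=
    (wdz_const_mul dwdzF 2).2
  have e5 : wdzbar (fun x => conj (Sfun ν μ τ x) * F x) w
      = wdzbar (fun x => conj (Sfun ν μ τ x)) w * F w + conj (Sfun ν μ τ w) * wdzbar F w :=
    (wdz_mul dconjS (hdF w)).2
  rw [DeltaTau, e0, e1, e2, e3, e4, e5, wdzbar_Sbar hequiv hτ ν μ w, abs_sq_c]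
  ring

-- PART 4

lemma Sfun_phi {τ : ℂ → ℂ} (hτ : ContDiff ℝ (⊤:ℕ∞) τ) (ν μ : ℝ) {a b A Bc : ℂ}
    (hτφ : ∀ w, τ (a*w+b) = A * τ w + Bc) (haa : a * conj a = 1) (hAA : A * conj A = 1)
    (w : ℂ) :
    Sfun ν μ τ (a*w+b) = a * Sfun ν μ τ w
      + ((ν:ℂ)*b + (μ:ℂ)*a*(conj A*Bc*conj (wdz τ w) - A*conj Bc*wdzbar τ w)) := by
  have hp := (wdz_tau_phi hτ hτφ haa w).1
  have hq := (wdz_tau_phi hτ hτφ haa w).2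
  rw [Sfun_eq ν μ (a*w+b), Sfun_eq ν μ w, hτφ w, hp, hq]
  rw [map_mul, map_mul, map_add, map_mul, Complex.conj_conj]
  linear_combination ((μ:ℂ)*a*(τ w*conj (wdz τ w) - conj (τ w)*wdzbar τ w)) * hAA

lemma K1_lemma {τ : ℂ → ℂ} (hτ : ContDiff ℝ (⊤:ℕ∞) τ) (ν μ : ℝ) {a b A Bc : ℂ}
    (hτφ : ∀ w, τ (a*w+b) = A * τ w + Bc) (haa : a * conj a = 1) (hAA : A * conj A = 1)
    (w : ℂ) :
    2 * wdzbar (ellfun ν μ τ a b A Bc) w + Sfun ν μ τ w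
      = conj a * Sfun ν μ τ (a*w+b) := by
  rw [Sfun_phi hτ ν μ hτφ haa hAA w,
    (ellfun_wdz ν μ a b A Bc (ContDiffTop.diff hτ w)).2]
  rw [map_neg, map_mul, Complex.conj_conj, map_neg, map_mul, Complex.conj_conj]
  linear_combination (- Sfun ν μ τ w
    - (μ:ℂ)*(conj A*Bc*conj (wdz τ w) - A*conj Bc*wdzbar τ w)) * haa

lemma K2_lemma {τ : ℂ → ℂ} (hτ : ContDiff ℝ (⊤:ℕ∞) τ) (ν μ : ℝ) {a b A Bc : ℂ}
    (hτφ : ∀ w, τ (a*w+b) = A * τ w + Bc) (haa : a * conj a = 1) (hAA : A * conj A = 1)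
    (w : ℂ) :
    2 * wdz (ellfun ν μ τ a b A Bc) w - conj (Sfun ν μ τ w)
      = -(a * conj (Sfun ν μ τ (a*w+b))) := by
  rw [Sfun_phi hτ ν μ hτφ haa hAA w,
    (ellfun_wdz ν μ a b A Bc (ContDiffTop.diff hτ w)).1]
  simp only [map_add, map_mul, map_sub, map_neg, Complex.conj_conj, Complex.conj_ofReal]
  linear_combination (conj (Sfun ν μ τ w)
    + (μ:ℂ)*(A*conj Bc*wdz τ w - conj A*Bc*conj (wdzbar τ w))) * haa

lemma cov1_lemma {τ : ℂ → ℂ} (hτ : ContDiff ℝ (⊤:ℕ∞) τ) (ν μ : ℝ) {a b A Bc : ℂ}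
    (hτφ : ∀ w, τ (a*w+b) = A * τ w + Bc) (haa : a * conj a = 1) (hAA : A * conj A = 1)
    (F : ℂ → ℂ) (hF : ContDiff ℝ (⊤:ℕ∞) F) (w : ℂ) :
    2 * wdzbar (fun x => Complex.exp (ellfun ν μ τ a b A Bc x) * F (a*x + b)) w
      + Sfun ν μ τ w * (Complex.exp (ellfun ν μ τ a b A Bc w) * F (a*w + b))
    = conj a * Complex.exp (ellfun ν μ τ a b A Bc w)
        * (2 * wdzbar F (a*w+b) + Sfun ν μ τ (a*w+b) * F (a*w+b)) := by
  have hdF := ContDiffTop.diff hF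
  have hdℓ : DifferentiableAt ℝ (ellfun ν μ τ a b A Bc) w :=
    ContDiffTop.diff (contDiff_ellfun hτ ν μ a b A Bc) w
  have hdE : DifferentiableAt ℝ (fun x => Complex.exp (ellfun ν μ τ a b A Bc x)) w := by
    have := ContDiffTop.diff ((Complex.contDiff_exp (𝕜 := ℝ)).comp
      (contDiff_ellfun hτ ν μ a b A Bc)) w
    exact this
  have hdFφ : DifferentiableAt ℝ (fun x => F (a*x+b)) w := by
    have haff : Differentiable ℝ (fun x : ℂ => a*x+b) :=
      ContDiffTop.diff ((contDiff_const.mul contDiff_id).add contDiff_const)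
    exact (hdF (a*w+b)).comp w (haff w)
  have h1 : wdzbar (fun x => Complex.exp (ellfun ν μ τ a b A Bc x) * F (a*x + b)) w
      = wdzbar (fun x => Complex.exp (ellfun ν μ τ a b A Bc x)) w * F (a*w+b)
        + Complex.exp (ellfun ν μ τ a b A Bc w) * wdzbar (fun x => F (a*x+b)) w :=
    (wdz_mul hdE hdFφ).2
  have h2 : wdzbar (fun x => Complex.exp (ellfun ν μ τ a b A Bc x)) w
      = Complex.exp (ellfun ν μ τ a b A Bc w) * wdzbar (ellfun ν μ τ a b A Bc) w :=
    (wdz_exp_comp hdℓ).2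
  have h3 : wdzbar (fun x => F (a*x+b)) w = conj a * wdzbar F (a*w+b) :=
    (wdz_affine_comp F (z := w) a b (hdF _)).2
  rw [h1, h2, h3]
  linear_combination (Complex.exp (ellfun ν μ τ a b A Bc w) * F (a*w+b))
    * (K1_lemma hτ ν μ hτφ haa hAA w)

lemma cov2_lemma {τ : ℂ → ℂ} (hτ : ContDiff ℝ (⊤:ℕ∞) τ) (ν μ : ℝ) {a b A Bc : ℂ}
    (hτφ : ∀ w, τ (a*w+b) = A * τ w + Bc) (haa : a * conj a = 1) (hAA : A * conj A = 1)
    (F : ℂ → ℂ) (hF : ContDiff ℝ (⊤:ℕ∞) F) (w : ℂ) :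
    2 * wdz (fun x => Complex.exp (ellfun ν μ τ a b A Bc x) * F (a*x + b)) w
      - conj (Sfun ν μ τ w) * (Complex.exp (ellfun ν μ τ a b A Bc w) * F (a*w + b))
    = a * Complex.exp (ellfun ν μ τ a b A Bc w)
        * (2 * wdz F (a*w+b) - conj (Sfun ν μ τ (a*w+b)) * F (a*w+b)) := by
  have hdF := ContDiffTop.diff hF
  have hdℓ : DifferentiableAt ℝ (ellfun ν μ τ a b A Bc) w :=
    ContDiffTop.diff (contDiff_ellfun hτ ν μ a b A Bc) w
  have hdE : DifferentiableAt ℝ (fun x => Complex.exp (ellfun ν μ τ a b A Bc x)) w := by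
    have := ContDiffTop.diff ((Complex.contDiff_exp (𝕜 := ℝ)).comp
      (contDiff_ellfun hτ ν μ a b A Bc)) w
    exact this
  have hdFφ : DifferentiableAt ℝ (fun x => F (a*x+b)) w := by
    have haff : Differentiable ℝ (fun x : ℂ => a*x+b) :=
      ContDiffTop.diff ((contDiff_const.mul contDiff_id).add contDiff_const)
    exact (hdF (a*w+b)).comp w (haff w)
  have h1 : wdz (fun x => Complex.exp (ellfun ν μ τ a b A Bc x) * F (a*x + b)) w
      = wdz (fun x => Complex.exp (ellfun ν μ τ a b A Bc x)) w * F (a*w+b)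
        + Complex.exp (ellfun ν μ τ a b A Bc w) * wdz (fun x => F (a*x+b)) w :=
    (wdz_mul hdE hdFφ).1
  have h2 : wdz (fun x => Complex.exp (ellfun ν μ τ a b A Bc x)) w
      = Complex.exp (ellfun ν μ τ a b A Bc w) * wdz (ellfun ν μ τ a b A Bc) w :=
    (wdz_exp_comp hdℓ).1
  have h3 : wdz (fun x => F (a*x+b)) w = a * wdz F (a*w+b) :=
    (wdz_affine_comp F (z := w) a b (hdF _)).1
  rw [h1, h2, h3]
  linear_combination (Complex.exp (ellfun ν μ τ a b A Bc w) * F (a*w+b))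
    * (K2_lemma hτ ν μ hτφ haa hAA w)

lemma Bfield_phi {τ : ℂ → ℂ} (hτ : ContDiff ℝ (⊤:ℕ∞) τ) (ν μ : ℝ) {a b A Bc : ℂ}
    (hτφ : ∀ w, τ (a*w+b) = A * τ w + Bc) (haa : a * conj a = 1)
    (habs_a : ‖a‖ = 1) (habs_A : ‖A‖ = 1) (w : ℂ) :
    Bfield ν μ τ (a*w+b) = Bfield ν μ τ w := by
  rw [Bfield, Bfield, (wdz_tau_phi hτ hτφ haa w).1, (wdz_tau_phi hτ hτφ haa w).2]
  simp [map_mul, Complex.norm_conj, habs_a, habs_A]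

-- PART 5 : final theorem

lemma keyconj (α : ℝ) (u : ℂ) :
    conj (-Complex.I * (α:ℂ) * ((u.im : ℝ) : ℂ)) = (α:ℂ)/2 * u - (α:ℂ)/2 * conj u := by
  have hs := Complex.sub_conj u
  push_cast at hs
  rw [map_mul, map_mul, map_neg, Complex.conj_I, Complex.conj_ofReal, Complex.conj_ofReal]
  linear_combination (-(α:ℂ)/2) * hs

lemma circle_mul_conj (x : Circle) : ((x : ℂ)) * conj (x : ℂ) = 1 := by
  rw [Complex.mul_conj]
  rw [Complex.normSq_eq_norm_sq, Circle.norm_coe]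
  norm_num

/-- the mixed Schrödinger operator `Δ^{ν,μ}_τ` commutes with the
projective representation `(T_g f)(z) = conj(J(g,z)) f(g·z)`, where
`J(g,z) = j^ν(g,z) j^μ(ρ(g),τ(z))`. -/
theorem deltaTau_invariant (ρ : G1 → G1) (τ : ℂ → ℂ) (hequiv : Equivariant ρ τ)
    (hτ : ContDiff ℝ (⊤ : ℕ∞) τ) (ν μ : ℝ) (g : G1)
    (f : ℂ → ℂ) (hf : ContDiff ℝ (⊤ : ℕ∞) f) (z : ℂ) :
    DeltaTau ν μ τ
        (fun w => conj (jfac ν g w * jfac μ (ρ g) (τ w)) * f (Gact g w)) z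
      = conj (jfac ν g z * jfac μ (ρ g) (τ z)) * DeltaTau ν μ τ f (Gact g z) := by
  classical
  have haa : (g.1:ℂ) * conj (g.1:ℂ) = 1 := circle_mul_conj g.1
  have hAA : ((ρ g).1:ℂ) * conj ((ρ g).1:ℂ) = 1 := circle_mul_conj (ρ g).1
  have habs_a : ‖(g.1:ℂ)‖ = 1 := Circle.norm_coe g.1
  have habs_A : ‖((ρ g).1:ℂ)‖ = 1 := Circle.norm_coe (ρ g).1
  have hτφ : ∀ w, τ ((g.1:ℂ)*w+g.2) = ((ρ g).1:ℂ) * τ w + (ρ g).2 := fun w => hequiv.2 g w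
  -- the conjugated automorphy factor is exp (ellfun ...)
  have hc1 : conj (Gact (Ginv g) 0) = -((g.1:ℂ) * conj g.2) := by
    rw [show Gact (Ginv g) 0 = -((g.1⁻¹ : Circle) : ℂ) * g.2 by simp [Gact, Ginv],
      Circle.coe_inv_eq_conj]
    rw [map_mul, map_neg, Complex.conj_conj]
    ring
  have hc2 : conj (Gact (Ginv (ρ g)) 0) = -(((ρ g).1:ℂ) * conj (ρ g).2) := by
    rw [show Gact (Ginv (ρ g)) 0 = -(((ρ g).1⁻¹ : Circle) : ℂ) * (ρ g).2 by simp [Gact, Ginv],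
      Circle.coe_inv_eq_conj]
    rw [map_mul, map_neg, Complex.conj_conj]
    ring
  have hJ : ∀ w, conj (jfac ν g w * jfac μ (ρ g) (τ w))
      = Complex.exp (ellfun ν μ τ (g.1:ℂ) g.2 ((ρ g).1:ℂ) (ρ g).2 w) := by
    intro w
    rw [jfac, jfac, map_mul, ← Complex.exp_conj, ← Complex.exp_conj, ← Complex.exp_add]
    congr 1
    rw [hc1, hc2, keyconj ν (w * -((g.1:ℂ)*conj g.2)), keyconj μ (τ w * -(((ρ g).1:ℂ)*conj (ρ g).2))]
    unfold ellfun
    simp only [map_mul, map_neg]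
    ring
  have hfunT : (fun w => conj (jfac ν g w * jfac μ (ρ g) (τ w)) * f (Gact g w))
      = fun w => Complex.exp (ellfun ν μ τ (g.1:ℂ) g.2 ((ρ g).1:ℂ) (ρ g).2 w) * f ((g.1:ℂ)*w+g.2) := by
    funext w
    rw [hJ w]
    rfl
  have hGz : Gact g z = (g.1:ℂ)*z+g.2 := rfl
  rw [hfunT, hJ z, hGz]
  -- smoothness facts
  have hE_cd : ContDiff ℝ (⊤:ℕ∞) (fun x => Complex.exp (ellfun ν μ τ (g.1:ℂ) g.2 ((ρ g).1:ℂ) (ρ g).2 x)) :=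
    (Complex.contDiff_exp (𝕜 := ℝ)).comp (contDiff_ellfun hτ ν μ (g.1:ℂ) g.2 ((ρ g).1:ℂ) (ρ g).2)
  have haff_cd : ContDiff ℝ (⊤:ℕ∞) (fun x : ℂ => (g.1:ℂ)*x+g.2) :=
    (contDiff_const.mul contDiff_id).add contDiff_const
  have hTf_cd : ContDiff ℝ (⊤:ℕ∞) (fun w => Complex.exp (ellfun ν μ τ (g.1:ℂ) g.2 ((ρ g).1:ℂ) (ρ g).2 w) * f ((g.1:ℂ)*w+g.2)) :=
    hE_cd.mul (hf.comp haff_cd)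
  have hG0_cd : ContDiff ℝ (⊤:ℕ∞) (fun y => 2 * wdz f y - conj (Sfun ν μ τ y) * f y) :=
    (contDiff_const.mul (contDiff_wdz hf).1).sub
      ((contDiff_conj_comp (contDiff_Sfun hτ ν μ)).mul hf)
  -- decompose both sides
  rw [deltaTau_decomp hequiv hτ ν μ _ hTf_cd z,
    deltaTau_decomp hequiv hτ ν μ f hf ((g.1:ℂ)*z+g.2)]
  -- identify A₂ (T f) with (g.1:ℂ) • T (A₂ f)
  have hfun2 : (fun x => 2 * wdz (fun w => Complex.exp (ellfun ν μ τ (g.1:ℂ) g.2 ((ρ g).1:ℂ) (ρ g).2 w) * f ((g.1:ℂ)*w+g.2)) x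
        - conj (Sfun ν μ τ x) * (Complex.exp (ellfun ν μ τ (g.1:ℂ) g.2 ((ρ g).1:ℂ) (ρ g).2 x) * f ((g.1:ℂ)*x+g.2)))
      = fun x => (g.1:ℂ) * (Complex.exp (ellfun ν μ τ (g.1:ℂ) g.2 ((ρ g).1:ℂ) (ρ g).2 x)
          * (2 * wdz f ((g.1:ℂ)*x+g.2) - conj (Sfun ν μ τ ((g.1:ℂ)*x+g.2)) * f ((g.1:ℂ)*x+g.2))) := by
    funext x
    have h := cov2_lemma hτ ν μ hτφ haa hAA f hf x
    linear_combination h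
  rw [hfun2]
  have hdTG0 : DifferentiableAt ℝ (fun x => Complex.exp (ellfun ν μ τ (g.1:ℂ) g.2 ((ρ g).1:ℂ) (ρ g).2 x)
      * (2 * wdz f ((g.1:ℂ)*x+g.2) - conj (Sfun ν μ τ ((g.1:ℂ)*x+g.2)) * f ((g.1:ℂ)*x+g.2))) z := by
    have h1 : ContDiff ℝ (⊤:ℕ∞) (fun x => Complex.exp (ellfun ν μ τ (g.1:ℂ) g.2 ((ρ g).1:ℂ) (ρ g).2 x)
        * (2 * wdz f ((g.1:ℂ)*x+g.2) - conj (Sfun ν μ τ ((g.1:ℂ)*x+g.2)) * f ((g.1:ℂ)*x+g.2))) :=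
      hE_cd.mul (hG0_cd.comp haff_cd)
    exact ContDiffTop.diff h1 z
  have hcm : wdzbar (fun x => (g.1:ℂ) * (Complex.exp (ellfun ν μ τ (g.1:ℂ) g.2 ((ρ g).1:ℂ) (ρ g).2 x)
        * (2 * wdz f ((g.1:ℂ)*x+g.2) - conj (Sfun ν μ τ ((g.1:ℂ)*x+g.2)) * f ((g.1:ℂ)*x+g.2)))) z
      = (g.1:ℂ) * wdzbar (fun x => Complex.exp (ellfun ν μ τ (g.1:ℂ) g.2 ((ρ g).1:ℂ) (ρ g).2 x)
        * (2 * wdz f ((g.1:ℂ)*x+g.2) - conj (Sfun ν μ τ ((g.1:ℂ)*x+g.2)) * f ((g.1:ℂ)*x+g.2))) z :=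
    (wdz_const_mul hdTG0 (g.1:ℂ)).2
  rw [hcm]
  have hcov1' : 2 * wdzbar (fun x => Complex.exp (ellfun ν μ τ (g.1:ℂ) g.2 ((ρ g).1:ℂ) (ρ g).2 x)
        * (2 * wdz f ((g.1:ℂ)*x+g.2) - conj (Sfun ν μ τ ((g.1:ℂ)*x+g.2)) * f ((g.1:ℂ)*x+g.2))) z
      + Sfun ν μ τ z * (Complex.exp (ellfun ν μ τ (g.1:ℂ) g.2 ((ρ g).1:ℂ) (ρ g).2 z)
        * (2 * wdz f ((g.1:ℂ)*z+g.2) - conj (Sfun ν μ τ ((g.1:ℂ)*z+g.2)) * f ((g.1:ℂ)*z+g.2)))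
      = conj (g.1:ℂ) * Complex.exp (ellfun ν μ τ (g.1:ℂ) g.2 ((ρ g).1:ℂ) (ρ g).2 z)
        * (2 * wdzbar (fun y => 2 * wdz f y - conj (Sfun ν μ τ y) * f y) ((g.1:ℂ)*z+g.2)
          + Sfun ν μ τ ((g.1:ℂ)*z+g.2) * ((fun y => 2 * wdz f y - conj (Sfun ν μ τ y) * f y) ((g.1:ℂ)*z+g.2))) :=
    cov1_lemma hτ ν μ hτφ haa hAA (fun y => 2 * wdz f y - conj (Sfun ν μ τ y) * f y) hG0_cd z
  have hB : ((Bfield ν μ τ ((g.1:ℂ)*z+g.2) : ℝ) : ℂ) = ((Bfield ν μ τ z : ℝ) : ℂ) := by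
    rw [Bfield_phi hτ ν μ hτφ haa habs_a habs_A z]
  have h2z : 2 * wdz (fun w => Complex.exp (ellfun ν μ τ (g.1:ℂ) g.2 ((ρ g).1:ℂ) (ρ g).2 w) * f ((g.1:ℂ)*w+g.2)) z
        - conj (Sfun ν μ τ z) * (Complex.exp (ellfun ν μ τ (g.1:ℂ) g.2 ((ρ g).1:ℂ) (ρ g).2 z) * f ((g.1:ℂ)*z+g.2))
      = (g.1:ℂ) * (Complex.exp (ellfun ν μ τ (g.1:ℂ) g.2 ((ρ g).1:ℂ) (ρ g).2 z)
          * (2 * wdz f ((g.1:ℂ)*z+g.2) - conj (Sfun ν μ τ ((g.1:ℂ)*z+g.2)) * f ((g.1:ℂ)*z+g.2))) := by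
    have h := cov2_lemma hτ ν μ hτφ haa hAA f hf z
    linear_combination h
  linear_combination (Sfun ν μ τ z) * h2z
    + (-(4:ℂ) * Complex.exp (ellfun ν μ τ (g.1:ℂ) g.2 ((ρ g).1:ℂ) (ρ g).2 z) * f ((g.1:ℂ)*z+g.2)) * hB
    + (g.1:ℂ) * hcov1'
    + (Complex.exp (ellfun ν μ τ (g.1:ℂ) g.2 ((ρ g).1:ℂ) (ρ g).2 z)
        * (2 * wdzbar (fun y => 2 * wdz f y - conj (Sfun ν μ τ y) * f y) ((g.1:ℂ)*z+g.2)
          + Sfun ν μ τ ((g.1:ℂ)*z+g.2)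
            * (2 * wdz f ((g.1:ℂ)*z+g.2) - conj (Sfun ν μ τ ((g.1:ℂ)*z+g.2)) * f ((g.1:ℂ)*z+g.2)))) * haa
    + (2 * Complex.exp (ellfun ν μ τ (g.1:ℂ) g.2 ((ρ g).1:ℂ) (ρ g).2 z) * f ((g.1:ℂ)*z+g.2)) * hB
end
end

section
/- Let (ρ,τ) be an equivariant pair with τ ℝ-differentiable, and let ν, μ ∈ ℝ. Then the function B(z) := ν + μ(|∂τ/∂z(z)|² − |∂τ/∂z̄(z)|²) is constant on ℂ, i.e. B(z) = B(0) for all z ∈ ℂ. -/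
open Complex MeasureTheory ComplexConjugate

noncomputable section

/-- for an equivariant pair `(ρ,τ)`, the magnetic field
`B(z) = ν + μ(|∂τ/∂z(z)|² − |∂τ/∂z̄(z)|²)` is constant on `ℂ`. -/
theorem bfield_constant (ρ : G1 → G1) (τ : ℂ → ℂ) (hequiv : Equivariant ρ τ)
    (hτ : Differentiable ℝ τ) (ν μ : ℝ) :
    ∀ z : ℂ, Bfield ν μ τ z = Bfield ν μ τ 0 := by
  intro z0
  obtain ⟨-, heq⟩ := hequiv
  set c : ℂ := ((ρ ((1:Circle), z0)).1 : ℂ) with hc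
  have hcabs : ‖c‖ = 1 := Circle.norm_coe _
  have h : ∀ z, τ (z + z0) = c * τ z + (ρ ((1:Circle), z0)).2 := by
    intro z
    have := heq ((1:Circle), z0) z
    simpa [Gact] using this
  have key : ∀ v, fderiv ℝ τ z0 v = c * fderiv ℝ τ 0 v := by
    intro v
    have h1 : HasFDerivAt (fun z => τ (z + z0)) (fderiv ℝ τ z0) 0 := by
      have h0 : HasFDerivAt τ (fderiv ℝ τ z0) (id (0:ℂ) + z0) := by
        simpa using (hτ z0).hasFDerivAt
      have := h0.comp (0:ℂ) ((hasFDerivAt_id (0:ℂ)).add_const z0)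
      simpa [Function.comp_def] using this
    have h2 : HasFDerivAt (fun z => τ (z + z0)) (c • fderiv ℝ τ 0) 0 := by
      have := ((hτ 0).hasFDerivAt.const_mul c).add_const (ρ ((1:Circle), z0)).2
      exact HasFDerivAt.congr_of_eventuallyEq this
        (by filter_upwards with z using (h z))
    rw [h1.unique h2]; simp
  have hz : wdz τ z0 = c * wdz τ 0 := by
    simp only [wdz, key]; ring
  have hzb : wdzbar τ z0 = c * wdzbar τ 0 := by
    simp only [wdzbar, key]; ring
  simp [Bfield, hz, hzb, map_mul, hcabs]
end
end

section
/- Let (ρ,τ) be an equivariant pair with τ of class C^∞, let ν, μ ∈ ℝ, and let B := ν + μ(|∂τ/∂z(0)|² − |∂τ/∂z̄(0)|²) (a constant). Then there exists a C^∞ function φ : ℂ → ℝ such that for all z, v ∈ ℂ: i·Dφ(z)(v) = −(1/2)(conj(S(z))·v − S(z)·conj(v)) + (B/2)(conj(z)·v − z·conj(v)), where Dφ(z) is the real Fréchet derivative of φ at z (i.e. θ^{ν,μ}_τ = θ_B + i·dφ with φ real-valued). -/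
open Complex MeasureTheory ComplexConjugate

noncomputable section

lemma fderiv_wirtinger (f : ℂ → ℂ) (z v : ℂ) :
    fderiv ℝ f z v = wdz f z * v + wdzbar f z * conj v := by
  have hv : fderiv ℝ f z v = (v.re : ℝ) • fderiv ℝ f z 1 + (v.im : ℝ) • fderiv ℝ f z Complex.I := by
    rw [← _root_.map_smul, ← _root_.map_smul, ← map_add]
    congr 1
    simp [Complex.real_smul, Complex.re_add_im]
  have hcv : conj v = (v.re : ℂ) - (v.im : ℂ) * Complex.I := by simp [Complex.ext_iff]
  have hvv : v = (v.re : ℂ) + (v.im : ℂ) * Complex.I := (Complex.re_add_im v).symm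
  unfold wdz wdzbar
  rw [hv, hcv]
  nth_rewrite 3 [hvv]
  push_cast [Complex.real_smul]
  linear_combination ((fderiv ℝ f z Complex.I) * (v.im:ℂ)) * Complex.I_sq

lemma wdzbar_conj_eq (f : ℂ → ℂ) (z : ℂ) (hf : DifferentiableAt ℝ f z) :
    wdzbar (fun w => conj (f w)) z = conj (wdz f z) := by
  have h : HasFDerivAt (fun w => conj (f w))
      ((Complex.conjCLE : ℂ →L[ℝ] ℂ).comp (fderiv ℝ f z)) z :=
    (Complex.conjCLE : ℂ →L[ℝ] ℂ).hasFDerivAt.comp z hf.hasFDerivAt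
  unfold wdzbar wdz
  rw [h.fderiv]
  simp only [ContinuousLinearMap.comp_apply, ContinuousLinearEquiv.coe_coe,
    Complex.conjCLE_apply, map_mul, map_sub, map_div₀, map_one, map_ofNat, Complex.conj_I]
  ring

lemma const_of_sq (f : ℂ → ℂ) (hf : Continuous f)
    (hsq : ∀ z, f z ^ 2 = f 0 ^ 2) (z : ℂ) : f z = f 0 := by
  have hpm : ∀ w, f w = f 0 ∨ f w = -f 0 := by
    intro w
    have h : (f w - f 0) * (f w + f 0) = 0 := by linear_combination hsq w
    rcases mul_eq_zero.1 h with h | h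
    · exact Or.inl (sub_eq_zero.1 h)
    · exact Or.inr (eq_neg_of_add_eq_zero_left h)
  rcases hpm z with h | h
  · exact h
  by_cases h0 : f 0 = 0
  · rw [h, h0, neg_zero]
  · exfalso
    set g : ℂ → ℝ := fun w => (f w * conj (f 0)).re with hg
    have hgc : Continuous g := Complex.continuous_re.comp (hf.mul continuous_const)
    have hg0 : g 0 = Complex.normSq (f 0) := by simp [hg, Complex.mul_conj, Complex.normSq_apply]
    have hgz : g z = -Complex.normSq (f 0) := by
      simp [hg, h, Complex.mul_conj, Complex.normSq_apply]; ring
    have hpos : 0 < Complex.normSq (f 0) := Complex.normSq_pos.2 h0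
    have h0mem : (0:ℝ) ∈ Set.Icc (g z) (g 0) := by
      rw [hg0, hgz]; constructor <;> linarith
    obtain ⟨w, hw⟩ := intermediate_value_univ z 0 hgc h0mem
    rcases hpm w with h' | h'
    · have : g w = Complex.normSq (f 0) := by simp [hg, h', Complex.mul_conj, Complex.normSq_apply]
      rw [hw] at this; linarith
    · have : g w = -Complex.normSq (f 0) := by
        simp [hg, h', Complex.mul_conj, Complex.normSq_apply]; ring
      rw [hw] at this; linarith

lemma circleI_mem : Complex.I ∈ Submonoid.unitSphere ℂ := by
  simp [Submonoid.unitSphere, Metric.mem_sphere]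

lemma circleNeg_mem : (-1 : ℂ) ∈ Submonoid.unitSphere ℂ := by
  norm_num [Submonoid.unitSphere, Metric.mem_sphere]

def circleI : Circle := ⟨Complex.I, circleI_mem⟩
def circleNeg : Circle := ⟨(-1 : ℂ), circleNeg_mem⟩

/-- existence of a smooth real gauge `φ` with
`θ^{ν,μ}_τ = θ_B + i dφ`, where `B = ν + μ(|∂τ/∂z(0)|² − |∂τ/∂z̄(0)|²)`. -/
theorem exists_gauge (ρ : G1 → G1) (τ : ℂ → ℂ) (hequiv : Equivariant ρ τ)
    (hτ : ContDiff ℝ (⊤ : ℕ∞) τ) (ν μ : ℝ) :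
    ∃ φ : ℂ → ℝ, IsGauge ν μ (Bfield ν μ τ 0) τ φ := by
  obtain ⟨-, heqv⟩ := hequiv
  have hdiff : Differentiable ℝ τ := hτ.differentiable (by simp)
  -- Step 1: differentiated equivariance
  have key : ∀ (a : Circle) (b z v : ℂ),
      fderiv ℝ τ ((a:ℂ)*z + b) ((a:ℂ)*v) = ((ρ (a,b)).1 : ℂ) * fderiv ℝ τ z v := by
    intro a b z v
    have heq : (fun w => τ ((a:ℂ)*w + b)) = fun w => ((ρ (a,b)).1 : ℂ) * τ w + (ρ (a,b)).2 := by
      funext w; exact heqv (a,b) w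
    have hin : HasFDerivAt (fun w : ℂ => (a:ℂ)*w + b) ((a:ℂ) • (1 : ℂ →L[ℝ] ℂ)) z := by
      simpa [ContinuousLinearMap.one_def] using ((hasFDerivAt_id z).const_mul (a:ℂ)).add_const b
    have h1 : HasFDerivAt (fun w => τ ((a:ℂ)*w + b))
        ((fderiv ℝ τ ((a:ℂ)*z+b)).comp ((a:ℂ) • (1 : ℂ →L[ℝ] ℂ))) z :=
      (hdiff ((a:ℂ)*z+b)).hasFDerivAt.comp z hin
    have h2 : HasFDerivAt (fun w => ((ρ (a,b)).1:ℂ) * τ w + (ρ (a,b)).2)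
        (((ρ (a,b)).1:ℂ) • fderiv ℝ τ z) z :=
      ((hdiff z).hasFDerivAt.const_mul _).add_const _
    rw [heq] at h1
    have h12 := h1.unique h2
    have h3 := congrArg (fun (L : ℂ →L[ℝ] ℂ) => L v) h12
    simpa [smul_eq_mul] using h3
  -- Step 2: Wirtinger form
  have keyw : ∀ (a : Circle) (b z : ℂ),
      wdz τ ((a:ℂ)*z+b) * (a:ℂ) = ((ρ (a,b)).1:ℂ) * wdz τ z ∧
      wdzbar τ ((a:ℂ)*z+b) * conj (a:ℂ) = ((ρ (a,b)).1:ℂ) * wdzbar τ z := by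
    intro a b z
    have e1 := key a b z 1
    have eI := key a b z Complex.I
    rw [fderiv_wirtinger, fderiv_wirtinger] at e1 eI
    simp only [mul_one, map_one, map_mul, Complex.conj_I] at e1 eI
    constructor
    · linear_combination e1/2 - Complex.I/2 * eI +
        ((wdz τ ((a:ℂ)*z+b) * (a:ℂ) - wdzbar τ ((a:ℂ)*z+b) * conj (a:ℂ)
          - ((ρ (a,b)).1:ℂ) * wdz τ z + ((ρ (a,b)).1:ℂ) * wdzbar τ z)/2) * Complex.I_sq
    · linear_combination e1/2 + Complex.I/2 * eI -
        ((wdz τ ((a:ℂ)*z+b) * (a:ℂ) - wdzbar τ ((a:ℂ)*z+b) * conj (a:ℂ)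
          - ((ρ (a,b)).1:ℂ) * wdz τ z + ((ρ (a,b)).1:ℂ) * wdzbar τ z)/2) * Complex.I_sq
  have hTp : ∀ b z : ℂ, wdz τ (z + b) = ((ρ (1,b)).1:ℂ) * wdz τ z := by
    intro b z
    have := (keyw 1 b z).1
    simpa using this
  have hTq : ∀ b z : ℂ, wdzbar τ (z + b) = ((ρ (1,b)).1:ℂ) * wdzbar τ z := by
    intro b z
    have := (keyw 1 b z).2
    simpa using this
  have hRp : ∀ (a : Circle) (z : ℂ), wdz τ ((a:ℂ)*z) * (a:ℂ) = ((ρ (a,0)).1:ℂ) * wdz τ z := by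
    intro a z; simpa using (keyw a 0 z).1
  have hRq : ∀ (a : Circle) (z : ℂ),
      wdzbar τ ((a:ℂ)*z) * conj (a:ℂ) = ((ρ (a,0)).1:ℂ) * wdzbar τ z := by
    intro a z; simpa using (keyw a 0 z).2
  -- continuity of Wirtinger derivatives
  have hfd : Continuous (fderiv ℝ τ) := hτ.continuous_fderiv (by simp)
  have hpcont : Continuous (wdz τ) := by
    unfold wdz
    exact continuous_const.mul ((hfd.clm_apply continuous_const).sub
      (continuous_const.mul (hfd.clm_apply continuous_const)))
  have hqcont : Continuous (wdzbar τ) := by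
    unfold wdzbar
    exact continuous_const.mul ((hfd.clm_apply continuous_const).add
      (continuous_const.mul (hfd.clm_apply continuous_const)))
  -- Step 3: the Wirtinger derivatives are constant
  have hconst : ∀ z, wdz τ z = wdz τ 0 ∧ wdzbar τ z = wdzbar τ 0 := by
    by_cases hp0 : wdz τ 0 = 0
    · by_cases hq0 : wdzbar τ 0 = 0
      · intro z
        constructor
        · have := hTp z 0; simp [hp0] at this; simp [this, hp0]
        · have := hTq z 0; simp [hq0] at this; simp [this, hq0]
      · -- q₀ ≠ 0 : antiholomorphic case
        have hA : ∀ (a : Circle), ((ρ (a,0)).1:ℂ) = conj (a:ℂ) := by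
          intro a
          have h := hRq a 0
          simp only [mul_zero] at h
          exact (mul_right_cancel₀ hq0 (by linear_combination h)).symm
        have hp_all : ∀ z, wdz τ z = 0 := by
          intro z; have := hTp z 0; simp [hp0] at this; simp [this]
        have hneg : ∀ z, wdzbar τ (-z) = wdzbar τ z := by
          intro z
          have h := hRq circleNeg z
          rw [hA circleNeg] at h
          have hc : conj ((circleNeg : Circle) : ℂ) = -1 := by
            simp [circleNeg]
          rw [hc] at h
          have : ((circleNeg : Circle) : ℂ) = -1 := rfl
          rw [this] at h
          have h2 : wdzbar τ (-z) * (-1) = -1 * wdzbar τ z := by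
            simpa using h
          linear_combination -h2
        have hsq : ∀ z, wdzbar τ z ^ 2 = wdzbar τ 0 ^ 2 := by
          intro z
          have hA1 : ∀ b : ℂ, ((ρ (1,b)).1 : ℂ) * wdzbar τ 0 = wdzbar τ b := by
            intro b; have := hTq b 0; simpa using this.symm
          have h2 : wdzbar τ 0 = ((ρ (1,-z)).1:ℂ) * wdzbar τ z := by
            have := hTq (-z) z; simpa using this
          have h3 := hA1 (-z)
          have h4 := hneg z
          linear_combination (-(wdzbar τ 0)) * h2 + (-(wdzbar τ z)) * h3 + (-(wdzbar τ z)) * h4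
        intro z
        exact ⟨by rw [hp_all z, hp_all 0], const_of_sq _ hqcont hsq z⟩
    · -- p₀ ≠ 0 : holomorphic case
      have hA : ∀ (a : Circle), ((ρ (a,0)).1:ℂ) = (a:ℂ) := by
        intro a
        have h := hRp a 0
        simp only [mul_zero] at h
        exact (mul_right_cancel₀ hp0 (by linear_combination h)).symm
      have hq0 : wdzbar τ 0 = 0 := by
        have h := hRq circleI 0
        rw [hA circleI] at h
        have hc : conj ((circleI : Circle) : ℂ) = -Complex.I := by
          simp [circleI]
        have hv : ((circleI : Circle) : ℂ) = Complex.I := rfl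
        rw [hc, hv] at h
        simp only [mul_zero] at h
        -- h : wdzbar τ 0 * -I = I * wdzbar τ 0
        have h2 : (2 * Complex.I) * wdzbar τ 0 = 0 := by linear_combination -h
        have hI2 : (2 * Complex.I) ≠ 0 := by
          simp [Complex.I_ne_zero]
        exact (mul_eq_zero.1 h2).resolve_left hI2
      have hq_all : ∀ z, wdzbar τ z = 0 := by
        intro z; have := hTq z 0; simp [hq0] at this; simp [this]
      have hneg : ∀ z, wdz τ (-z) = wdz τ z := by
        intro z
        have h := hRp circleNeg z
        rw [hA circleNeg] at h
        have hv : ((circleNeg : Circle) : ℂ) = -1 := rfl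
        rw [hv] at h
        have h2 : wdz τ (-z) * (-1) = -1 * wdz τ z := by simpa using h
        linear_combination -h2
      have hsq : ∀ z, wdz τ z ^ 2 = wdz τ 0 ^ 2 := by
        intro z
        have hA1 : ∀ b : ℂ, ((ρ (1,b)).1 : ℂ) * wdz τ 0 = wdz τ b := by
          intro b; have := hTp b 0; simpa using this.symm
        have h2 : wdz τ 0 = ((ρ (1,-z)).1:ℂ) * wdz τ z := by
          have := hTp (-z) z; simpa using this
        have h3 := hA1 (-z)
        have h4 := hneg z
        linear_combination (-(wdz τ 0)) * h2 + (-(wdz τ z)) * h3 + (-(wdz τ z)) * h4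
      intro z
      exact ⟨const_of_sq _ hpcont hsq z, by rw [hq_all z, hq_all 0]⟩
  -- Step 4: τ is affine
  set α : ℂ := wdz τ 0 with hα
  set β : ℂ := wdzbar τ 0 with hβ
  set c : ℂ := τ 0 with hc
  have hM : ∀ z, HasFDerivAt (fun w => τ w - (α * w + β * conj w)) (0 : ℂ →L[ℝ] ℂ) z := by
    intro z
    have h1 : HasFDerivAt (fun w : ℂ => α * w) (α • (1:ℂ→L[ℝ]ℂ)) z := by
      simpa [ContinuousLinearMap.one_def] using (hasFDerivAt_id z).const_mul α
    have h2 : HasFDerivAt (fun w : ℂ => β * conj w) (β • (Complex.conjCLE : ℂ →L[ℝ] ℂ)) z := by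
      simpa using ((Complex.conjCLE : ℂ →L[ℝ] ℂ).hasFDerivAt (x := z)).const_mul β
    have hg : HasFDerivAt (fun w : ℂ => α * w + β * conj w)
        (α • (1 : ℂ →L[ℝ] ℂ) + β • (Complex.conjCLE : ℂ →L[ℝ] ℂ)) z := h1.add h2
    have hfz : fderiv ℝ τ z = α • (1 : ℂ →L[ℝ] ℂ) + β • (Complex.conjCLE : ℂ →L[ℝ] ℂ) := by
      apply ContinuousLinearMap.ext
      intro v
      rw [fderiv_wirtinger, (hconst z).1, (hconst z).2]
      simp [smul_eq_mul]
    have hτM : HasFDerivAt τ (α • (1 : ℂ →L[ℝ] ℂ) + β • (Complex.conjCLE : ℂ →L[ℝ] ℂ)) z := by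
      rw [← hfz]; exact (hdiff z).hasFDerivAt
    have h := hτM.sub hg; rw [sub_self] at h; exact h
  have htau : ∀ z, τ z = c + α * z + β * conj z := by
    intro z
    have h := is_const_of_fderiv_eq_zero (𝕜 := ℝ)
      (f := fun w => τ w - (α * w + β * conj w))
      (fun w => (hM w).differentiableAt) (fun w => (hM w).fderiv) z 0
    simp only [mul_zero, map_zero, add_zero, sub_zero] at h
    linear_combination h
  -- Step 5: compute S and B
  have hS : ∀ z, Sfun ν μ τ z =
      ((ν:ℂ) + (μ:ℂ) * (α * conj α - β * conj β)) * z + (μ:ℂ) * (c * conj α - conj c * β) := by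
    intro z
    unfold Sfun
    rw [wdzbar_conj_eq τ z (hdiff z), (hconst z).1, (hconst z).2, htau z]
    simp only [map_add, map_mul, Complex.conj_conj]
    ring
  have hB : ((Bfield ν μ τ 0 : ℝ) : ℂ) = (ν:ℂ) + (μ:ℂ) * (α * conj α - β * conj β) := by
    unfold Bfield
    push_cast
    rw [show ((‖wdz τ 0‖ : ℂ))^2 = α * conj α by
          rw [← Complex.ofReal_pow, Complex.sq_norm, Complex.mul_conj],
        show ((‖wdzbar τ 0‖ : ℂ))^2 = β * conj β by
          rw [← Complex.ofReal_pow, Complex.sq_norm, Complex.mul_conj]]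
  -- Step 6: the gauge
  set K : ℂ := (μ:ℂ) * (c * conj α - conj c * β) with hK
  refine ⟨(Complex.imCLM.comp ((-(conj K)) • (1 : ℂ →L[ℝ] ℂ)) : ℂ →L[ℝ] ℝ),
    ContinuousLinearMap.contDiff _, ?_⟩
  intro z v
  rw [ContinuousLinearMap.fderiv]
  have hTv : (Complex.imCLM.comp ((-(conj K)) • (1 : ℂ →L[ℝ] ℂ))) v = (-(conj K) * v).im := by
    simp [smul_eq_mul]
  have him : ∀ w : ℂ, Complex.I * ((w.im : ℝ) : ℂ) = (w - conj w)/2 := by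
    intro w
    rw [Complex.sub_conj]
    push_cast
    ring
  rw [hTv, him, hS z, hB]
  simp only [hK, map_add, map_mul, map_sub, map_neg, Complex.conj_conj, Complex.conj_ofReal]
  ring
end
end

section
/- Let (ρ,τ) be an equivariant pair with τ ℝ-differentiable, and write ρ(g) = [φ(g), ψ(g)] with φ(g) ∈ U(1), ψ(g) ∈ ℂ. Then for every g = [a,b] ∈ G and z ∈ ℂ: (∂τ/∂z)(g·z) = conj(a)·φ(g)·(∂τ/∂z)(z) and (∂τ/∂z̄)(g·z) = a·φ(g)·(∂τ/∂z̄)(z). -/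
open Complex MeasureTheory ComplexConjugate

noncomputable section

lemma wirtinger_decomp_aux (L : ℂ →L[ℝ] ℂ) (u : ℂ) :
    L u = (1/2:ℂ)*(L 1 - Complex.I * L Complex.I)*u
        + (1/2:ℂ)*(L 1 + Complex.I * L Complex.I)*(conj u) := by
  obtain ⟨x, y, rfl⟩ : ∃ x y : ℝ, u = ↑x + ↑y * Complex.I :=
    ⟨u.re, u.im, (Complex.re_add_im u).symm⟩
  have h1 : (↑x + ↑y * Complex.I : ℂ) = x • (1:ℂ) + y • Complex.I := by
    simp [Complex.real_smul]
  conv_lhs => rw [h1]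
  rw [map_add, L.map_smul, L.map_smul]
  have hc : conj (↑x + ↑y * Complex.I : ℂ) = ↑x - ↑y * Complex.I := by
    simp [Complex.ext_iff]
  rw [hc]
  simp only [Complex.real_smul]
  ring_nf
  rw [Complex.I_sq]
  ring

/-- transformation rules of the Wirtinger derivatives of the
equivariant map `τ` under the action of `g = [a,b]`, with `ρ(g) = [φ(g), ψ(g)]`:
`∂τ/∂z(g·z) = ā φ(g) ∂τ/∂z(z)` and `∂τ/∂z̄(g·z) = a φ(g) ∂τ/∂z̄(z)`. -/
theorem wirtinger_equivariance (ρ : G1 → G1) (τ : ℂ → ℂ) (hequiv : Equivariant ρ τ)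
    (hτ : Differentiable ℝ τ) (g : G1) (z : ℂ) :
    wdz τ (Gact g z) = conj ((g.1 : ℂ)) * ((ρ g).1 : ℂ) * wdz τ z ∧
      wdzbar τ (Gact g z) = (g.1 : ℂ) * ((ρ g).1 : ℂ) * wdzbar τ z := by
  obtain ⟨-, heq⟩ := hequiv
  set a : ℂ := (g.1 : ℂ) with ha
  set c : ℂ := ((ρ g).1 : ℂ) with hc
  have haa : a * conj a = 1 := by
    rw [Complex.mul_conj, Complex.normSq_eq_norm_sq, Circle.norm_coe]
    norm_num
  set L := fderiv ℝ τ z with hL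
  set M := fderiv ℝ τ (Gact g z) with hM
  set La := ContinuousLinearMap.mul ℝ ℂ a with hLa
  have hGact : HasFDerivAt (Gact g) La z := by
    have hG : Gact g = fun w => a * w + g.2 := rfl
    rw [hG]
    exact ((ContinuousLinearMap.mul ℝ ℂ a).hasFDerivAt (x := z)).add_const g.2
  have hcomp : HasFDerivAt (fun w => τ (Gact g w)) (M.comp La) z :=
    (hτ (Gact g z)).hasFDerivAt.comp z hGact
  have hrhs : HasFDerivAt (fun w => c * τ w + (ρ g).2) (c • L) z :=
    ((hτ z).hasFDerivAt.const_mul c).add_const (ρ g).2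
  have hfun : (fun w => τ (Gact g w)) = fun w => c * τ w + (ρ g).2 := by
    funext w; rw [heq g w]; rfl
  rw [hfun] at hcomp
  have huniq : M.comp La = c • L := hcomp.unique hrhs
  have key : ∀ v, M (a * v) = c * L v := by
    intro v
    have := DFunLike.congr_fun huniq v
    simpa [hLa, ContinuousLinearMap.mul_apply'] using this
  have key2 : ∀ v, M v = c * L (conj a * v) := by
    intro v
    have h := key (conj a * v)
    rwa [← mul_assoc, haa, one_mul] at h
  have hM1 : M 1 = c * L (conj a) := by simpa using key2 1
  have hMI : M Complex.I = c * L (conj a * Complex.I) := key2 Complex.I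
  have hca : conj (conj a) = a := Complex.conj_conj a
  have hcaI : conj (conj a * Complex.I) = -(a * Complex.I) := by
    rw [map_mul, Complex.conj_conj, Complex.conj_I]; ring
  have hLca := wirtinger_decomp_aux L (conj a)
  have hLcaI := wirtinger_decomp_aux L (conj a * Complex.I)
  rw [hca] at hLca
  rw [hcaI] at hLcaI
  constructor
  · show (1/2 : ℂ) * (M 1 - Complex.I * M Complex.I) = conj a * c *
      ((1/2 : ℂ) * (L 1 - Complex.I * L Complex.I))
    rw [hM1, hMI, hLca, hLcaI]
    linear_combination (-(c/2) * ((1/2*(L 1 - Complex.I * L Complex.I)) * conj a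
      - (1/2*(L 1 + Complex.I * L Complex.I)) * a)) * Complex.I_mul_I
  · show (1/2 : ℂ) * (M 1 + Complex.I * M Complex.I) = a * c *
      ((1/2 : ℂ) * (L 1 + Complex.I * L Complex.I))
    rw [hM1, hMI, hLca, hLcaI]
    linear_combination ((c/2) * ((1/2*(L 1 - Complex.I * L Complex.I)) * conj a
      - (1/2*(L 1 + Complex.I * L Complex.I)) * a)) * Complex.I_mul_I
end
end
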